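/- Let F be a CNF formula over variables X that is symmetric with respect to every permutation in a group G of permutations of X, and let P be a nonempty set of points falsifying F that is stable modulo symmetry G with respect to F and a transport function g : P → F. Then the union of the G-orbits of the points of P, namely Q = { π(p) : π ∈ G, p ∈ P }, is a stable set of points with respect to F and some transport function g' (which on a point π(p) can be taken to be the clause π(g(p))). -/

import Mathlib

/-- A point `p` satisfies a clause `C` (a finite set of literals) if it
satisfies some literal of `C`. -/
def satClause {X : Type*} (p : X → Bool) (C : Finset (X × Bool)) : Prop :=
  ∃ l ∈ C, p l.1 = l.2

/-- The 1-neighborhood of a point `p` with respect to a clause `C`: points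
differing from `p` in exactly one variable that satisfy `C`. -/
def Nbhd {X : Type*} (p : X → Bool) (C : Finset (X × Bool)) : Set (X → Bool) :=
  {q | (∃! x, q x ≠ p x) ∧ satClause q C}

/-- The action of a permutation `π` of the variables on a point:
`π(p) = p ∘ π⁻¹`. -/
def permPoint {X : Type*} (π : Equiv.Perm X) (p : X → Bool) : X → Bool :=
  fun x => p (π.symm x)

/-- The action of a permutation `π` of the variables on a clause. -/
def permClause {X : Type*} [DecidableEq X] (π : Equiv.Perm X)
    (C : Finset (X × Bool)) : Finset (X × Bool) :=
  C.image fun l => (π l.1, l.2)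


lemma permPoint_mul {X : Type*} (π σ : Equiv.Perm X) (p : X → Bool) :
    permPoint π (permPoint σ p) = permPoint (π * σ) p := by
  rfl

lemma satClause_perm {X : Type*} [DecidableEq X] (π : Equiv.Perm X)
    (p : X → Bool) (C : Finset (X × Bool))
    (h : satClause (permPoint π p) (permClause π C)) : satClause p C := by
  obtain ⟨l, hl, hval⟩ := h
  simp only [permClause, Finset.mem_image] at hl
  obtain ⟨m, hm, rfl⟩ := hl
  refine ⟨m, hm, ?_⟩
  simpa [permPoint] using hval

lemma Nbhd_perm {X : Type*} [DecidableEq X] (π : Equiv.Perm X) (p : X → Bool)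
    (C : Finset (X × Bool)) (q : X → Bool)
    (h : q ∈ Nbhd (permPoint π p) (permClause π C)) :
    permPoint π⁻¹ q ∈ Nbhd p C := by
  obtain ⟨⟨x, hx, hux⟩, hsat⟩ := h
  constructor
  · refine ⟨π.symm x, ?_, ?_⟩
    · simpa [permPoint, Equiv.Perm.inv_def] using hx
    · intro y hy
      have : π y = x := by
        apply hux
        simpa [permPoint, Equiv.Perm.inv_def] using hy
      simp [← this]
  · obtain ⟨l, hl, hval⟩ := hsat
    simp only [permClause, Finset.mem_image] at hl
    obtain ⟨m, hm, rfl⟩ := hl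
    refine ⟨m, hm, ?_⟩
    simpa [permPoint, Equiv.Perm.inv_def] using hval

theorem stmt_7 {X : Type*} [Fintype X] [DecidableEq X]
    (F : Finset (Finset (X × Bool)))
    (hF : ∀ C ∈ F, ∀ l₁ ∈ C, ∀ l₂ ∈ C, (l₁ : X × Bool).1 = (l₂ : X × Bool).1 → l₁ = l₂)
    (G : Subgroup (Equiv.Perm X))
    -- `F` is symmetric with respect to every permutation of `G`
    (hsym : ∀ π ∈ G, F.image (permClause π) = F)
    (P : Set (X → Bool)) (hP : P.Nonempty)
    (g : (X → Bool) → Finset (X × Bool))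
    -- `g` is a transport function on `P`
    (hg : ∀ p ∈ P, g p ∈ F ∧ ¬ satClause p (g p))
    -- `P` is stable modulo symmetry `G` with respect to `F` and `g`
    (hstab : ∀ p ∈ P, ∀ p' ∈ Nbhd p (g p),
        p' ∈ P ∨ ∃ π ∈ G, ∃ p'' ∈ P, p' = permPoint π p'') :
    -- the union `Q` of the `G`-orbits of the points of `P` is a stable set of
    -- points with respect to `F` and some transport function `g'`
    ∃ g' : (X → Bool) → Finset (X × Bool),
      (∀ q ∈ {q | ∃ π ∈ G, ∃ p ∈ P, q = permPoint π p},
          g' q ∈ F ∧ ¬ satClause q (g' q)) ∧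
      (∀ q ∈ {q | ∃ π ∈ G, ∃ p ∈ P, q = permPoint π p},
          Nbhd q (g' q) ⊆ {q | ∃ π ∈ G, ∃ p ∈ P, q = permPoint π p}) := by
  classical
  have hch : ∀ q : X → Bool, (∃ π ∈ G, ∃ p ∈ P, q = permPoint π p) →
      ∃ πp : Equiv.Perm X × (X → Bool),
        πp.1 ∈ G ∧ πp.2 ∈ P ∧ q = permPoint πp.1 πp.2 := by
    rintro q ⟨π, hπ, p, hp, rfl⟩
    exact ⟨(π, p), hπ, hp, rfl⟩
  choose! w hw1 hw2 hw3 using hch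
  refine ⟨fun q => permClause (w q).1 (g (w q).2), ?_, ?_⟩
  · intro q hq
    have hπ := hw1 q hq
    have hp := hw2 q hq
    have hqe := hw3 q hq
    set π := (w q).1
    set p := (w q).2
    obtain ⟨hgF, hgns⟩ := hg _ hp
    constructor
    · rw [← hsym _ hπ]
      exact Finset.mem_image_of_mem _ hgF
    · intro hs
      have hs' : satClause (permPoint π p) (permClause π (g p)) := by
        rw [← hqe]; exact hs
      exact hgns (satClause_perm π p (g p) hs')
  · intro q hq q' hq'
    have hπ := hw1 q hq
    have hp := hw2 q hq
    have hqe := hw3 q hq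
    set π := (w q).1
    set p := (w q).2
    have hq'' : q' ∈ Nbhd (permPoint π p) (permClause π (g p)) := by
      rw [← hqe]; exact hq'
    have h2 := Nbhd_perm π p (g p) q' hq''
    have hq'eq : q' = permPoint π (permPoint π⁻¹ q') := by
      rw [permPoint_mul, mul_inv_cancel]
      funext x; simp [permPoint]; rfl
    rcases hstab _ hp _ h2 with h | ⟨σ, hσ, p'', hp'', he⟩
    · exact ⟨π, hπ, _, h, hq'eq⟩
    · refine ⟨π * σ, mul_mem hπ hσ, p'', hp'', ?_⟩
      rw [hq'eq, he, permPoint_mul]
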